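/- Let χ : Fbr → ℝ be a group homomorphism that vanishes on Pbr and satisfies χ(x_1) ≠ 0 and χ(x_0) ≠ χ(x_1) (equivalently, a character of Fbr killing Pbr whose φ0- and φ1-components are both nonzero). Then for every finite generating set S of Fbr, the full subgraph of the Cayley graph Γ(Fbr,S) spanned by {g ∈ Fbr : χ(g) ≥ 0} is connected; that is, [χ] ∈ Σ¹(Fbr). -/

import Mathlib

namespace BrThompson

/-- Generators of the braided Thompson group `Fbr`: `x i` for `i ≥ 0`,
and `a i j`, `b i j` (the α- and β-generators) for `1 ≤ i < j`. -/
inductive FbrGen : Type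
  | x : ℕ → FbrGen
  | a : (i j : ℕ) → 1 ≤ i → i < j → FbrGen
  | b : (i j : ℕ) → 1 ≤ i → i < j → FbrGen

/-- The generator `x i` as an element of the free group. -/
def xg (i : ℕ) : FreeGroup FbrGen := FreeGroup.of (FbrGen.x i)

/-- The generator `α i j` as an element of the free group (junk value `1` for invalid indices). -/
def ag (i j : ℕ) : FreeGroup FbrGen :=
  if h : 1 ≤ i ∧ i < j then FreeGroup.of (FbrGen.a i j h.1 h.2) else 1

/-- The generator `β i j` as an element of the free group (junk value `1` for invalid indices). -/
def bg (i j : ℕ) : FreeGroup FbrGen :=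
  if h : 1 ≤ i ∧ i < j then FreeGroup.of (FbrGen.b i j h.1 h.2) else 1

/-- The defining relations of `Fbr`, each written as a word that is set equal to `1`,
namely `u * v⁻¹` for a relation `u = v`. -/
inductive IsFbrRel : FreeGroup FbrGen → Prop
  | relA (i j : ℕ) (h : i < j) :
      IsFbrRel (xg j * xg i * (xg i * xg (j + 1))⁻¹)
  | relB1a (r s i j : ℕ) (h0 : 1 ≤ r) (h1 : r < s) (h2 : s < i) (h3 : i < j) :
      IsFbrRel ((ag r s)⁻¹ * ag i j * ag r s * (ag i j)⁻¹)
  | relB1b (i r s j : ℕ) (h0 : 1 ≤ i) (h1 : i < r) (h2 : r < s) (h3 : s < j) :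
      IsFbrRel ((ag r s)⁻¹ * ag i j * ag r s * (ag i j)⁻¹)
  | relB2 (r i j : ℕ) (h0 : 1 ≤ r) (h1 : r < i) (h2 : i < j) :
      IsFbrRel ((ag r i)⁻¹ * ag i j * ag r i * (ag r j * ag i j * (ag r j)⁻¹)⁻¹)
  | relB3 (i s j : ℕ) (h0 : 1 ≤ i) (h1 : i < s) (h2 : s < j) :
      IsFbrRel ((ag i s)⁻¹ * ag i j * ag i s *
        (ag i j * ag s j * ag i j * (ag i j * ag s j)⁻¹)⁻¹)
  | relB4 (r i s j : ℕ) (h0 : 1 ≤ r) (h1 : r < i) (h2 : i < s) (h3 : s < j) :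
      IsFbrRel ((ag r s)⁻¹ * ag i j * ag r s *
        (ag r j * ag s j * (ag r j)⁻¹ * (ag s j)⁻¹ * ag i j *
          (ag r j * ag s j * (ag r j)⁻¹ * (ag s j)⁻¹)⁻¹)⁻¹)
  | relB5a (r s i j : ℕ) (h0 : 1 ≤ r) (h1 : r < s) (h2 : s < i) (h3 : i < j) :
      IsFbrRel ((ag r s)⁻¹ * bg i j * ag r s * (bg i j)⁻¹)
  | relB5b (i r s j : ℕ) (h0 : 1 ≤ i) (h1 : i < r) (h2 : r < s) (h3 : s < j) :
      IsFbrRel ((ag r s)⁻¹ * bg i j * ag r s * (bg i j)⁻¹)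
  | relB6 (r i j : ℕ) (h0 : 1 ≤ r) (h1 : r < i) (h2 : i < j) :
      IsFbrRel ((ag r i)⁻¹ * bg i j * ag r i * (bg r j * bg i j * (bg r j)⁻¹)⁻¹)
  | relB7 (i s j : ℕ) (h0 : 1 ≤ i) (h1 : i < s) (h2 : s < j) :
      IsFbrRel ((ag i s)⁻¹ * bg i j * ag i s *
        (bg i j * bg s j * bg i j * (bg i j * bg s j)⁻¹)⁻¹)
  | relB8 (r i s j : ℕ) (h0 : 1 ≤ r) (h1 : r < i) (h2 : i < s) (h3 : s < j) :
      IsFbrRel ((ag r s)⁻¹ * bg i j * ag r s *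
        (bg r j * bg s j * (bg r j)⁻¹ * (bg s j)⁻¹ * bg i j *
          (bg r j * bg s j * (bg r j)⁻¹ * (bg s j)⁻¹)⁻¹)⁻¹)
  | relC (i j : ℕ) (h0 : 1 ≤ i) (h1 : i < j) :
      IsFbrRel (bg i j * (bg i (j + 1) * ag i j)⁻¹)
  | relD1 (k i j : ℕ) (h0 : 1 ≤ k) (h1 : k < i) (h2 : i < j) :
      IsFbrRel (ag i j * xg (k - 1) * (xg (k - 1) * ag (i + 1) (j + 1))⁻¹)
  | relD2 (i j : ℕ) (h0 : 1 ≤ i) (h1 : i < j) :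
      IsFbrRel (ag i j * xg (i - 1) * (xg (i - 1) * ag (i + 1) (j + 1) * ag i (j + 1))⁻¹)
  | relD3 (i k j : ℕ) (h0 : 1 ≤ i) (h1 : i < k) (h2 : k < j) :
      IsFbrRel (ag i j * xg (k - 1) * (xg (k - 1) * ag i (j + 1))⁻¹)
  | relD4 (i j : ℕ) (h0 : 1 ≤ i) (h1 : i < j) :
      IsFbrRel (ag i j * xg (j - 1) * (xg (j - 1) * ag i (j + 1) * ag i j)⁻¹)
  | relD5 (i j k : ℕ) (h0 : 1 ≤ i) (h1 : i < j) (h2 : j < k) :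
      IsFbrRel (ag i j * xg (k - 1) * (xg (k - 1) * ag i j)⁻¹)
  | relD6 (k i j : ℕ) (h0 : 1 ≤ k) (h1 : k < i) (h2 : i < j) :
      IsFbrRel (bg i j * xg (k - 1) * (xg (k - 1) * bg (i + 1) (j + 1))⁻¹)
  | relD7 (i j : ℕ) (h0 : 1 ≤ i) (h1 : i < j) :
      IsFbrRel (bg i j * xg (i - 1) * (xg (i - 1) * bg (i + 1) (j + 1) * bg i (j + 1))⁻¹)
  | relD8 (i k j : ℕ) (h0 : 1 ≤ i) (h1 : i < k) (h2 : k < j) :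
      IsFbrRel (bg i j * xg (k - 1) * (xg (k - 1) * bg i (j + 1))⁻¹)
  | relD9 (i j k : ℕ) (h0 : 1 ≤ i) (h1 : i < j) (h2 : j < k) :
      IsFbrRel (bg i j * xg (k - 1) * (xg (k - 1) * bg i j)⁻¹)

def fbrRels : Set (FreeGroup FbrGen) := {r | IsFbrRel r}

/-- The braided Thompson group `Fbr` of Brady–Burillo–Cleary–Stein. -/
abbrev Fbr : Type := PresentedGroup fbrRels

/-- The generator `x i` of `Fbr`. -/
def x (i : ℕ) : Fbr := PresentedGroup.of (FbrGen.x i)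

/-- The generator `α i j` of `Fbr` (junk value `1` for invalid indices). -/
def al (i j : ℕ) : Fbr :=
  if h : 1 ≤ i ∧ i < j then PresentedGroup.of (FbrGen.a i j h.1 h.2) else 1

/-- The generator `β i j` of `Fbr` (junk value `1` for invalid indices). -/
def be (i j : ℕ) : Fbr :=
  if h : 1 ≤ i ∧ i < j then PresentedGroup.of (FbrGen.b i j h.1 h.2) else 1

/-- The defining relations of Thompson's group `F`. -/
inductive IsThFRel : FreeGroup ℕ → Prop
  | relA (i j : ℕ) (h : i < j) :
      IsThFRel (FreeGroup.of j * FreeGroup.of i * (FreeGroup.of i * FreeGroup.of (j + 1))⁻¹)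

def thfRels : Set (FreeGroup ℕ) := {r | IsThFRel r}

/-- Thompson's group `F`. -/
abbrev ThF : Type := PresentedGroup thfRels

/-- The generator `x i` of Thompson's group `F`. -/
def fX (i : ℕ) : ThF := PresentedGroup.of i

/-- `π : Fbr →* F` is the natural projection: it sends `x i` to `x i` and
all α- and β-generators to `1`. `Pbr` is its kernel. -/
def PiSpec (π : Fbr →* ThF) : Prop :=
  (∀ i, π (x i) = fX i) ∧
  (∀ i j, 1 ≤ i → i < j → π (al i j) = 1) ∧
  (∀ i j, 1 ≤ i → i < j → π (be i j) = 1)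

/-- A character of `Fbr`: a homomorphism to the additive reals. -/
def IsChar (χ : Fbr → ℝ) : Prop := ∀ g h : Fbr, χ (g * h) = χ g + χ h

/-- The character `φ0` of `Fbr`. -/
def Phi0Spec (φ : Fbr → ℝ) : Prop :=
  IsChar φ ∧ φ (x 0) = -1 ∧ (∀ i, 1 ≤ i → φ (x i) = 0) ∧
  (∀ i j, 1 ≤ i → i < j → φ (al i j) = 0) ∧ (∀ i j, 1 ≤ i → i < j → φ (be i j) = 0)

/-- The character `φ1` of `Fbr`. -/
def Phi1Spec (φ : Fbr → ℝ) : Prop :=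
  IsChar φ ∧ (∀ i, φ (x i) = -1) ∧
  (∀ i j, 1 ≤ i → i < j → φ (al i j) = 0) ∧ (∀ i j, 1 ≤ i → i < j → φ (be i j) = 0)

/-- The full subgraph of the Cayley graph `Γ(G,S)` spanned by the vertices satisfying `P`. -/
def cayleySubgraph {G : Type*} [Group G] (S : Finset G) (P : G → Prop) :
    SimpleGraph {g : G // P g} where
  Adj a b := a ≠ b ∧ ∃ s ∈ S, (b : G) = (a : G) * s ∨ (a : G) = (b : G) * s
  symm := by
    constructor
    rintro a b ⟨hne, s, hs, h⟩
    exact ⟨hne.symm, s, hs, h.symm⟩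
  loopless := by constructor; rintro a ⟨h, -⟩; exact h rfl


/-! ### Auxiliary machinery for the proof -/

section Aux

/-- The relations of `Fbr` hold in `Fbr`. -/
lemma mk_rel {r : FreeGroup FbrGen} (h : IsFbrRel r) :
    PresentedGroup.mk fbrRels r = 1 :=
  (QuotientGroup.eq_one_iff r).2 (Subgroup.subset_normalClosure h)

lemma mk_xg (i : ℕ) : PresentedGroup.mk fbrRels (xg i) = x i := rfl

lemma mk_ag (i j : ℕ) : PresentedGroup.mk fbrRels (ag i j) = al i j := by
  unfold ag al
  split_ifs with h
  · rfl
  · simp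

lemma mk_bg (i j : ℕ) : PresentedGroup.mk fbrRels (bg i j) = be i j := by
  unfold bg be
  split_ifs with h
  · rfl
  · simp

lemma relA' {i j : ℕ} (h : i < j) : x j * x i = x i * x (j + 1) := by
  have h1 : (x j * x i) * (x i * x (j + 1))⁻¹ = 1 := by
    simpa [map_mul, map_inv, mk_xg] using mk_rel (IsFbrRel.relA i j h)
  exact mul_inv_eq_one.mp h1

lemma relD5' {i j m : ℕ} (h0 : 1 ≤ i) (h1 : i < j) (h2 : j ≤ m) :
    al i j * x m = x m * al i j := by
  have h3 : j < m + 1 := Nat.lt_succ_of_le h2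
  have h4 := mk_rel (IsFbrRel.relD5 i j (m + 1) h0 h1 h3)
  have h5 : (al i j * x m) * (x m * al i j)⁻¹ = 1 := by
    simpa [map_mul, map_inv, mk_xg, mk_ag] using h4
  exact mul_inv_eq_one.mp h5

lemma relD9' {i j m : ℕ} (h0 : 1 ≤ i) (h1 : i < j) (h2 : j ≤ m) :
    be i j * x m = x m * be i j := by
  have h3 : j < m + 1 := Nat.lt_succ_of_le h2
  have h4 := mk_rel (IsFbrRel.relD9 i j (m + 1) h0 h1 h3)
  have h5 : (be i j * x m) * (x m * be i j)⁻¹ = 1 := by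
    simpa [map_mul, map_inv, mk_xg, mk_bg] using h4
  exact mul_inv_eq_one.mp h5

end Aux


section Identities

/-- `x (j+1) = x0⁻¹ * x j * x0` for `j ≥ 1`. -/
lemma conj_x0 {j : ℕ} (hj : 1 ≤ j) : x (j + 1) = (x 0)⁻¹ * x j * x 0 := by
  have h := relA' (show 0 < j from hj)
  rw [mul_assoc, h]; group

/-- `x (j+1) = x1⁻¹ * x j * x1` for `j ≥ 2`. -/
lemma conj_x1 {j : ℕ} (hj : 2 ≤ j) : x (j + 1) = (x 1)⁻¹ * x j * x 1 := by
  have h := relA' (show 1 < j from hj)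
  rw [mul_assoc, h]; group

/-- Tower expression: `x (n+1) = (x0⁻¹)^n * x1 * x0^n`. -/
lemma tower0 : ∀ n : ℕ, x (n + 1) = ((x 0)⁻¹) ^ n * x 1 * (x 0) ^ n := by
  intro n
  induction n with
  | zero => simp
  | succ n ih =>
    have h1 : x (n + 1 + 1) = (x 0)⁻¹ * x (n + 1) * x 0 := conj_x0 (by omega)
    rw [h1, ih, pow_succ, pow_succ]
    group

/-- Tower expression: `x (n+2) = (x1⁻¹)^n * x 2 * x1^n`. -/
lemma tower1 : ∀ n : ℕ, x (n + 2) = ((x 1)⁻¹) ^ n * x 2 * (x 1) ^ n := by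
  intro n
  induction n with
  | zero => simp
  | succ n ih =>
    have h1 : x (n + 2 + 1) = (x 1)⁻¹ * x (n + 2) * x 1 := conj_x1 (by omega)
    have h2 : n + 1 + 2 = n + 2 + 1 := by omega
    rw [h2, h1, ih, pow_succ, pow_succ]
    group

/-- Raising: `x (n+2) = x1^k * x (n+2+k) * (x1⁻¹)^k`. -/
lemma raise1 (n : ℕ) : ∀ k : ℕ, x (n + 2) = (x 1) ^ k * x (n + 2 + k) * ((x 1)⁻¹) ^ k := by
  intro k
  induction k with
  | zero => simp
  | succ k ih =>
    have h1 : x (n + 2 + k + 1) = (x 1)⁻¹ * x (n + 2 + k) * x 1 := conj_x1 (by omega)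
    have h2 : n + 2 + (k + 1) = n + 2 + k + 1 := by omega
    rw [ih, pow_succ, pow_succ, h2, h1]
    group

/-- The element `t = x0 * x1⁻¹` commutes with `x j` for `j ≥ 2`. -/
lemma t_comm {j : ℕ} (hj : 2 ≤ j) : Commute (x 0 * (x 1)⁻¹) (x j) := by
  have e1 : (x 1)⁻¹ * x j = x (j + 1) * (x 1)⁻¹ := by
    rw [conj_x1 hj]; group
  have e2 : x 0 * x (j + 1) = x j * x 0 := (relA' (show 0 < j by omega)).symm
  show x 0 * (x 1)⁻¹ * x j = x j * (x 0 * (x 1)⁻¹)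
  calc x 0 * (x 1)⁻¹ * x j = x 0 * (x (j+1) * (x 1)⁻¹) := by rw [mul_assoc, e1]
    _ = (x 0 * x (j + 1)) * (x 1)⁻¹ := by group
    _ = x j * x 0 * (x 1)⁻¹ := by rw [e2]
    _ = x j * (x 0 * (x 1)⁻¹) := by group

end Identities

section CharLemmas

variable {χ : Fbr → ℝ}

lemma char_one (hχ : IsChar χ) : χ 1 = 0 := by
  have := hχ 1 1; simp at this; linarith

lemma char_inv (hχ : IsChar χ) (g : Fbr) : χ g⁻¹ = -χ g := by
  have h := hχ g⁻¹ g
  rw [inv_mul_cancel, char_one hχ] at h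
  linarith

lemma char_pow (hχ : IsChar χ) (g : Fbr) : ∀ n : ℕ, χ (g ^ n) = n * χ g := by
  intro n
  induction n with
  | zero => simpa using char_one hχ
  | succ n ih => rw [pow_succ, hχ, ih]; push_cast; ring

/-- All `x i` with `i ≥ 1` have the same character value. -/
lemma char_x (hχ : IsChar χ) : ∀ i : ℕ, 1 ≤ i → χ (x i) = χ (x 1) := by
  intro i hi
  induction i with
  | zero => omega
  | succ i ih =>
    rcases Nat.eq_or_lt_of_le hi with h | h
    · simp [← h]
    · have hi1 : 1 ≤ i := by omega
      have h2 := relA' (show 0 < i from hi1)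
      have h3 := hχ (x i) (x 0)
      rw [h2, hχ] at h3
      have : χ (x (i+1)) = χ (x i) := by linarith
      rw [this, ih hi1]

end CharLemmas

section Shift

/-- `v` intertwines high-index generators: `x (m+q) * v = v * x (m+p)` for all `m`. -/
def Shifts (v : Fbr) (p q : ℕ) : Prop := ∀ m : ℕ, x (m + q) * v = v * x (m + p)

lemma Shifts.one_shift (q : ℕ) : Shifts 1 q q := fun m => by group

lemma Shifts.up {v : Fbr} {p q : ℕ} (h : Shifts v p q) (t : ℕ) :
    Shifts v (p + t) (q + t) := by
  intro m
  have e1 : m + (q + t) = (m + t) + q := by omega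
  have e2 : m + (p + t) = (m + t) + p := by omega
  rw [e1, e2]
  exact h (m + t)

lemma Shifts.mul {v w : Fbr} {p q p' q' : ℕ} (hv : Shifts v p q) (hw : Shifts w p' q') :
    Shifts (v * w) (p + p') (q + q') := by
  intro m
  have h1 := hv.up q' m
  have h2 := hw.up p m
  have e1 : m + (q' + p) = m + (p + q') := by omega
  have e2 : m + (p' + p) = m + (p + p') := by omega
  rw [e1, e2] at h2
  calc x (m + (q + q')) * (v * w) = (x (m + (q + q')) * v) * w := by group
    _ = v * (x (m + (p + q')) * w) := by rw [h1]; group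
    _ = v * (w * x (m + (p + p'))) := by rw [h2]
    _ = (v * w) * x (m + (p + p')) := by group

lemma Shifts.inv {v : Fbr} {p q : ℕ} (h : Shifts v p q) : Shifts v⁻¹ q p := by
  intro m
  have h1 := h m
  have h2 : v⁻¹ * (x (m + q) * v) * v⁻¹ = v⁻¹ * (v * x (m + p)) * v⁻¹ := by rw [h1]
  have h3 : v⁻¹ * x (m + q) = x (m + p) * v⁻¹ := by
    calc v⁻¹ * x (m + q) = v⁻¹ * (x (m + q) * v) * v⁻¹ := by group
      _ = v⁻¹ * (v * x (m + p)) * v⁻¹ := h2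
      _ = x (m + p) * v⁻¹ := by group
  exact h3.symm

lemma shifts_gen (t : FbrGen) :
    ∃ p q : ℕ, 1 ≤ p ∧ 1 ≤ q ∧ Shifts (PresentedGroup.of t : Fbr) p q := by
  cases t with
  | x i =>
    refine ⟨i + 2, i + 1, by omega, by omega, fun m => ?_⟩
    have h := relA' (show i < m + (i + 1) by omega)
    have e : m + (i + 1) + 1 = m + (i + 2) := by omega
    rw [e] at h
    exact h
  | a i j h1 h2 =>
    refine ⟨j, j, by omega, by omega, fun m => ?_⟩
    have hal : al i j = PresentedGroup.of (FbrGen.a i j h1 h2) := dif_pos ⟨h1, h2⟩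
    rw [← hal]
    exact (relD5' h1 h2 (show j ≤ m + j by omega)).symm
  | b i j h1 h2 =>
    refine ⟨j, j, by omega, by omega, fun m => ?_⟩
    have hbe : be i j = PresentedGroup.of (FbrGen.b i j h1 h2) := dif_pos ⟨h1, h2⟩
    rw [← hbe]
    exact (relD9' h1 h2 (show j ≤ m + j by omega)).symm

lemma shifts_all (v : Fbr) : ∃ p q : ℕ, 1 ≤ p ∧ 1 ≤ q ∧ Shifts v p q := by
  have hv : v ∈ Subgroup.closure (Set.range (PresentedGroup.of : FbrGen → Fbr)) := by
    rw [PresentedGroup.closure_range_of]; trivial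
  refine Subgroup.closure_induction ?_ ?_ ?_ ?_ hv
  · rintro _ ⟨t, rfl⟩
    exact shifts_gen t
  · exact ⟨1, 1, le_refl 1, le_refl 1, Shifts.one_shift 1⟩
  · rintro v w _ _ ⟨p, q, hp, hq, hv'⟩ ⟨p', q', hp', hq', hw'⟩
    exact ⟨p + p', q + q', by omega, by omega, hv'.mul hw'⟩
  · rintro v _ ⟨p, q, hp, hq, hv'⟩
    exact ⟨q, p, hq, hp, hv'.inv⟩

lemma Shifts.pow_left {v : Fbr} {p q : ℕ} (h : Shifts v p q) (R : ℕ) :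
    (x q) ^ R * v = v * (x p) ^ R := by
  induction R with
  | zero => group
  | succ R ih =>
    have h0 := h 0
    simp only [Nat.zero_add] at h0
    calc (x q) ^ (R + 1) * v = (x q) ^ R * (x q * v) := by rw [pow_succ]; group
      _ = (x q) ^ R * (v * x p) := by rw [h0]
      _ = ((x q) ^ R * v) * x p := by group
      _ = v * (x p) ^ R * x p := by rw [ih]
      _ = v * (x p) ^ (R + 1) := by rw [pow_succ]; group

lemma Shifts.pow_left_inv {v : Fbr} {p q : ℕ} (h : Shifts v p q) (R : ℕ) :
    ((x q)⁻¹) ^ R * v = v * ((x p)⁻¹) ^ R := by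
  have h1 := h.inv.pow_left R
  -- (x p)^R * v⁻¹ = v⁻¹ * (x q)^R
  have h2 := congrArg (fun z : Fbr => z⁻¹) h1
  simp only [mul_inv_rev, inv_inv, ← inv_pow] at h2
  -- h2 : v * ((x p)⁻¹)^R = ((x q)⁻¹)^R * v
  exact h2.symm

end Shift


section ChainSection

/-- A path in the Cayley graph of `(Fbr, S)` all of whose vertices have `χ`-value `≥ c`. -/
inductive Chain (χ : Fbr → ℝ) (S : Finset Fbr) (c : ℝ) : Fbr → Fbr → Prop
  | refl (g : Fbr) (hg : c ≤ χ g) : Chain χ S c g g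
  | step {g h : Fbr} (s : Fbr) (hs : s ∈ S ∨ s⁻¹ ∈ S) (hc : Chain χ S c g h)
      (hh : c ≤ χ (h * s)) : Chain χ S c g (h * s)

variable {χ : Fbr → ℝ} {S : Finset Fbr}

lemma Chain.left {c : ℝ} {g k : Fbr} (h : Chain χ S c g k) : c ≤ χ g := by
  induction h with
  | refl hg => exact hg
  | step s hs hc hh ih => exact ih

lemma Chain.right {c : ℝ} {g k : Fbr} (h : Chain χ S c g k) : c ≤ χ k := by
  cases h with
  | refl hg => exact hg
  | step s hs hc hh => exact hh

lemma Chain.trans {c : ℝ} {g h k : Fbr} (h1 : Chain χ S c g h) (h2 : Chain χ S c h k) :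
    Chain χ S c g k := by
  induction h2 with
  | refl hg => exact h1
  | step s hs hc hh ih => exact Chain.step s hs ih hh

lemma Chain.single {c : ℝ} {g s : Fbr} (hs : s ∈ S ∨ s⁻¹ ∈ S) (hg : c ≤ χ g)
    (hgs : c ≤ χ (g * s)) : Chain χ S c g (g * s) :=
  Chain.step s hs (Chain.refl g hg) hgs

lemma Chain.symm {c : ℝ} {g k : Fbr} (h : Chain χ S c g k) : Chain χ S c k g := by
  induction h with
  | refl hg => exact Chain.refl _ hg
  | @step h s hs hc hh ih =>
    refine Chain.trans ?_ ih
    have hs' : s⁻¹ ∈ S ∨ (s⁻¹)⁻¹ ∈ S := by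
      rcases hs with h' | h'
      · exact Or.inr (by simpa using h')
      · exact Or.inl h'
    have e : (h * s) * s⁻¹ = h := by group
    have := Chain.single (χ := χ) (S := S) (g := h * s) hs' hh (by rw [e]; exact hc.right)
    rwa [e] at this

lemma Chain.mono {c c' : ℝ} {g k : Fbr} (hcc : c' ≤ c) (h : Chain χ S c g k) :
    Chain χ S c' g k := by
  induction h with
  | refl hg => exact Chain.refl _ (le_trans hcc hg)
  | step s hs hc hh ih => exact Chain.step s hs ih (le_trans hcc hh)

/-- `EW h d` : from any base point `g` there is a path from `g` to `g * h` staying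
at `χ`-height at least `χ g - d`. ("`h` has a spelling with dip at most `d`.") -/
def EW (χ : Fbr → ℝ) (S : Finset Fbr) (h : Fbr) (d : ℝ) : Prop :=
  ∀ g : Fbr, Chain χ S (χ g - d) g (g * h)

lemma EW.mono {h : Fbr} {d d' : ℝ} (hdd : d ≤ d') (he : EW χ S h d) : EW χ S h d' :=
  fun g => (he g).mono (by linarith)

lemma EW.one : EW χ S 1 0 := by
  intro g
  have : Chain χ S (χ g - 0) g g := Chain.refl g (by linarith)
  simpa using this

lemma EW.mem (hχ : IsChar χ) {s : Fbr} (hs : s ∈ S ∨ s⁻¹ ∈ S) :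
    EW χ S s (max 0 (-χ s)) := by
  intro g
  refine Chain.single hs ?_ ?_
  · have : (0:ℝ) ≤ max 0 (-χ s) := le_max_left _ _
    linarith
  · have : -χ s ≤ max 0 (-χ s) := le_max_right _ _
    rw [hχ]
    linarith

lemma EW.mul (hχ : IsChar χ) {v w : Fbr} {d e : ℝ} (hv : EW χ S v d) (hw : EW χ S w e) :
    EW χ S (v * w) (max d (e - χ v)) := by
  intro g
  have c1 : Chain χ S (χ g - max d (e - χ v)) g (g * v) :=
    (hv g).mono (by have := le_max_left d (e - χ v); linarith)
  have c2 : Chain χ S (χ g - max d (e - χ v)) (g * v) (g * v * w) := by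
    refine (hw (g * v)).mono ?_
    rw [hχ g v]
    have := le_max_right d (e - χ v)
    linarith
  have := c1.trans c2
  rwa [mul_assoc] at this

lemma EW.inv (hχ : IsChar χ) {v : Fbr} {d : ℝ} (hv : EW χ S v d) :
    EW χ S v⁻¹ (d + χ v) := by
  intro g
  have c := (hv (g * v⁻¹)).symm
  have e1 : g * v⁻¹ * v = g := by group
  rw [e1] at c
  have e2 : χ (g * v⁻¹) = χ g - χ v := by rw [hχ, char_inv hχ]; ring
  rw [e2] at c
  exact c.mono (by linarith)

lemma EW.pow (hχ : IsChar χ) {v : Fbr} {d : ℝ} (hd : 0 ≤ d) (hv : EW χ S v d) :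
    ∀ n : ℕ, EW χ S (v ^ n) (d + n * max 0 (-χ v)) := by
  intro n
  induction n with
  | zero =>
    simp only [pow_zero, Nat.cast_zero, zero_mul, add_zero]
    exact EW.one.mono hd
  | succ n ih =>
    rw [pow_succ]
    refine (EW.mul hχ ih hv).mono ?_
    have h1 : χ (v ^ n) = n * χ v := char_pow hχ v n
    have h2 : -χ v ≤ max 0 (-χ v) := le_max_right _ _
    have h3 : (0:ℝ) ≤ max 0 (-χ v) := le_max_left _ _
    have h4 : -(n * χ v) ≤ n * max 0 (-χ v) := by
      have := mul_le_mul_of_nonneg_left h2 (by positivity : (0:ℝ) ≤ (n:ℝ))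
      nlinarith
    refine max_le ?_ ?_
    · push_cast; nlinarith
    · rw [h1]; push_cast; nlinarith

lemma EW.exists_of_mem_closure (hχ : IsChar χ) (hS : Subgroup.closure (S : Set Fbr) = ⊤)
    (v : Fbr) : ∃ d : ℝ, 0 ≤ d ∧ EW χ S v d := by
  have hv : v ∈ Subgroup.closure (S : Set Fbr) := by rw [hS]; trivial
  refine Subgroup.closure_induction ?_ ?_ ?_ ?_ hv
  · intro s hs
    exact ⟨max 0 (-χ s), le_max_left _ _, EW.mem hχ (Or.inl hs)⟩
  · exact ⟨0, le_refl 0, EW.one⟩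
  · rintro v w _ _ ⟨d, hd, hv'⟩ ⟨e, he, hw'⟩
    exact ⟨max d (e - χ v), le_trans hd (le_max_left _ _), EW.mul hχ hv' hw'⟩
  · rintro v _ ⟨d, hd, hv'⟩
    exact ⟨max 0 (d + χ v), le_max_left _ _, (EW.inv hχ hv').mono (le_max_right _ _)⟩

end ChainSection


section Club

variable {χ : Fbr → ℝ} {S : Finset Fbr}

lemma EW.mul3 (hχ : IsChar χ) {v1 v2 v3 : Fbr} {d1 d2 d3 : ℝ}
    (p1 : EW χ S v1 d1) (p2 : EW χ S v2 d2) (p3 : EW χ S v3 d3) :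
    EW χ S (v1 * v2 * v3) (max (max d1 (d2 - χ v1)) (d3 - (χ v1 + χ v2))) := by
  have h := EW.mul hχ (EW.mul hχ p1 p2) p3
  have e2 : χ (v1 * v2) = χ v1 + χ v2 := hχ _ _
  rwa [e2] at h

lemma EW.mul5 (hχ : IsChar χ) {v1 v2 v3 v4 v5 : Fbr} {d1 d2 d3 d4 d5 : ℝ}
    (p1 : EW χ S v1 d1) (p2 : EW χ S v2 d2) (p3 : EW χ S v3 d3)
    (p4 : EW χ S v4 d4) (p5 : EW χ S v5 d5) :
    EW χ S (v1 * v2 * v3 * v4 * v5)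
      (max (max (max (max d1 (d2 - χ v1)) (d3 - (χ v1 + χ v2)))
        (d4 - (χ v1 + χ v2 + χ v3))) (d5 - (χ v1 + χ v2 + χ v3 + χ v4))) := by
  have h := EW.mul hχ (EW.mul hχ (EW.mul hχ (EW.mul hχ p1 p2) p3) p4) p5
  have e2 : χ (v1 * v2) = χ v1 + χ v2 := hχ _ _
  have e3 : χ (v1 * v2 * v3) = χ v1 + χ v2 + χ v3 := by rw [hχ, e2]
  have e4 : χ (v1 * v2 * v3 * v4) = χ v1 + χ v2 + χ v3 + χ v4 := by rw [hχ, e3]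
  rwa [e2, e3, e4] at h

private lemma exists_nat_mul_ge (c : ℝ) (hc : 0 < c) (y : ℝ) : ∃ k : ℕ, y ≤ k * c := by
  refine ⟨⌈y / c⌉₊, ?_⟩
  have h1 : y / c ≤ (⌈y / c⌉₊ : ℝ) := Nat.le_ceil _
  calc y = (y / c) * c := by field_simp
    _ ≤ (⌈y / c⌉₊ : ℝ) * c := by
        exact mul_le_mul_of_nonneg_right h1 (le_of_lt hc)

set_option maxHeartbeats 1000000 in
/-- Uniform-dip spellings of all the generators `x N`, `N ≥ 1`. -/
lemma club (hχ : IsChar χ) (hb : χ (x 1) ≠ 0) (hab : χ (x 0) ≠ χ (x 1))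
    {d₀ d₁ : ℝ} (h0 : 0 ≤ d₀) (h1 : 0 ≤ d₁)
    (e0 : EW χ S (x 0) d₀) (e1 : EW χ S (x 1) d₁) :
    ∀ N : ℕ, 1 ≤ N →
      EW χ S (x N) (d₀ + d₁ + 2 * |χ (x 0)| + 2 * |χ (x 1)|) := by
  intro N hN
  have habs := abs_nonneg (χ (x 0))
  have habs' := abs_nonneg (χ (x 1))
  have hla := le_abs_self (χ (x 0))
  have hla' := neg_abs_le (χ (x 0))
  have hlb := le_abs_self (χ (x 1))
  have hlb' := neg_abs_le (χ (x 1))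
  have cInv0 : χ ((x 0)⁻¹) = -χ (x 0) := char_inv hχ _
  have cInv1 : χ ((x 1)⁻¹) = -χ (x 1) := char_inv hχ _
  have cP : ∀ (v : Fbr) (n : ℕ), χ (v ^ n) = n * χ v := char_pow hχ
  have hd1top : d₁ ≤ d₀ + d₁ + 2 * |χ (x 0)| + 2 * |χ (x 1)| := by linarith
  rcases le_or_gt (χ (x 0)) 0 with hA | hA
  · -- Case A : χ (x 0) ≤ 0, any b.  x (n+1) = (x0⁻¹)^n * x1 * x0^n
    obtain ⟨n, rfl⟩ : ∃ n, N = n + 1 := ⟨N - 1, by omega⟩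
    have p1 : EW χ S (((x 0)⁻¹) ^ n) (d₀ + (n : ℝ) * max 0 (-χ ((x 0)⁻¹))) :=
      EW.pow hχ h0 ((EW.inv hχ e0).mono (by linarith)) n
    have hm : max 0 (-χ ((x 0)⁻¹)) = 0 := max_eq_left (by rw [cInv0]; linarith)
    rw [hm] at p1
    have p3 : EW χ S ((x 0) ^ n) (d₀ + (n : ℝ) * max 0 (-χ (x 0))) := EW.pow hχ h0 e0 n
    have hm2 : max 0 (-χ (x 0)) = -χ (x 0) := max_eq_right (by linarith)
    rw [hm2] at p3
    rw [tower0 n]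
    refine EW.mono ?_ (EW.mul3 hχ p1 e1 p3)
    simp only [cP, cInv0, Nat.cast_add, Nat.cast_one, mul_zero, add_zero]
    have hn0 : (0:ℝ) ≤ (n:ℝ) := Nat.cast_nonneg n
    refine max_le (max_le ?_ ?_) ?_ <;> nlinarith
  · rcases lt_or_ge (χ (x 1)) 0 with hB | hBpos
    · -- Case B : χ (x 1) < 0 (and χ (x 0) > 0).
      rcases lt_or_ge N 2 with h2 | h2
      · have : N = 1 := by omega
        subst this
        exact e1.mono hd1top
      obtain ⟨n, rfl⟩ : ∃ n, N = n + 2 := ⟨N - 2, by omega⟩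
      have hx2 : x 2 = (x 0)⁻¹ * x 1 * x 0 := by
        have := tower0 1
        simpa using this
      have idB : x (n + 2) = ((x 1)⁻¹) ^ n * (x 0)⁻¹ * x 1 * x 0 * (x 1) ^ n := by
        rw [tower1 n, hx2]; group
      have p1 : EW χ S (((x 1)⁻¹) ^ n) (d₁ + (n : ℝ) * max 0 (-χ ((x 1)⁻¹))) :=
        EW.pow hχ h1 ((EW.inv hχ e1).mono (by linarith)) n
      have hm : max 0 (-χ ((x 1)⁻¹)) = 0 := max_eq_left (by rw [cInv1]; linarith)
      rw [hm] at p1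
      have p2 : EW χ S ((x 0)⁻¹) (d₀ + χ (x 0)) := EW.inv hχ e0
      have p5 : EW χ S ((x 1) ^ n) (d₁ + (n : ℝ) * max 0 (-χ (x 1))) := EW.pow hχ h1 e1 n
      have hm2 : max 0 (-χ (x 1)) = -χ (x 1) := max_eq_right (by linarith)
      rw [hm2] at p5
      rw [idB]
      refine EW.mono ?_ (EW.mul5 hχ p1 p2 e1 e0 p5)
      simp only [cP, cInv0, cInv1, Nat.cast_add, Nat.cast_one, mul_zero, add_zero]
      have hn0 : (0:ℝ) ≤ (n:ℝ) := Nat.cast_nonneg n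
      refine max_le (max_le (max_le (max_le ?_ ?_) ?_) ?_) ?_ <;> nlinarith
    · have hBpos' : 0 < χ (x 1) := lt_of_le_of_ne hBpos (Ne.symm hb)
      rcases lt_trichotomy (χ (x 0)) (χ (x 1)) with hC | hE | hD
      · -- Case C : 0 < χ (x 0) < χ (x 1).
        rcases lt_or_ge N 2 with h2 | h2
        · have : N = 1 := by omega
          subst this
          exact e1.mono hd1top
        obtain ⟨n, rfl⟩ : ∃ n, N = n + 2 := ⟨N - 2, by omega⟩
        obtain ⟨k, hk⟩ := exists_nat_mul_ge (χ (x 1) - χ (x 0)) (by linarith)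
          (((n:ℝ) + 1) * χ (x 0))
        have idC : x (n + 2) =
            (x 1) ^ k * ((x 0)⁻¹) ^ (n + k + 1) * x 1 * (x 0) ^ (n + k + 1)
              * ((x 1)⁻¹) ^ k := by
          have h1' := raise1 n k
          have e : n + 2 + k = (n + k + 1) + 1 := by omega
          rw [h1', e, tower0 (n + k + 1)]; group
        have p1 : EW χ S ((x 1) ^ k) (d₁ + (k : ℝ) * max 0 (-χ (x 1))) := EW.pow hχ h1 e1 k
        have hm1 : max 0 (-χ (x 1)) = 0 := max_eq_left (by linarith)
        rw [hm1] at p1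
        have p2 : EW χ S (((x 0)⁻¹) ^ (n + k + 1))
            ((d₀ + χ (x 0)) + ((n + k + 1 : ℕ) : ℝ) * max 0 (-χ ((x 0)⁻¹))) :=
          EW.pow hχ (by linarith) (EW.inv hχ e0) (n + k + 1)
        have hm2 : max 0 (-χ ((x 0)⁻¹)) = χ (x 0) := by
          rw [cInv0, neg_neg]; exact max_eq_right (by linarith)
        rw [hm2] at p2
        have p4 : EW χ S ((x 0) ^ (n + k + 1)) (d₀ + ((n + k + 1 : ℕ) : ℝ) * max 0 (-χ (x 0))) :=
          EW.pow hχ h0 e0 (n + k + 1)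
        have hm4 : max 0 (-χ (x 0)) = 0 := max_eq_left (by linarith)
        rw [hm4] at p4
        have p5 : EW χ S (((x 1)⁻¹) ^ k) ((d₁ + χ (x 1)) + (k : ℝ) * max 0 (-χ ((x 1)⁻¹))) :=
          EW.pow hχ (by linarith) (EW.inv hχ e1) k
        have hm5 : max 0 (-χ ((x 1)⁻¹)) = χ (x 1) := by
          rw [cInv1, neg_neg]; exact max_eq_right (by linarith)
        rw [hm5] at p5
        rw [idC]
        refine EW.mono ?_ (EW.mul5 hχ p1 p2 e1 p4 p5)
        simp only [cP, cInv0, cInv1, Nat.cast_add, Nat.cast_one, mul_zero, add_zero]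
        have hn0 : (0:ℝ) ≤ (n:ℝ) := Nat.cast_nonneg n
        have hk0 : (0:ℝ) ≤ (k:ℝ) := Nat.cast_nonneg k
        refine max_le (max_le (max_le (max_le ?_ ?_) ?_) ?_) ?_ <;> nlinarith
      · exact absurd hE hab
      · -- Case D : 0 < χ (x 1) < χ (x 0).
        rcases lt_or_ge N 2 with h2 | h2
        · have : N = 1 := by omega
          subst this
          exact e1.mono hd1top
        obtain ⟨n, rfl⟩ : ∃ n, N = n + 2 := ⟨N - 2, by omega⟩
        obtain ⟨k, hk⟩ := exists_nat_mul_ge (χ (x 0) - χ (x 1)) (by linarith)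
          (((n:ℝ) + 1) * χ (x 0))
        have hct : χ (x 0 * (x 1)⁻¹) = χ (x 0) - χ (x 1) := by
          rw [hχ, cInv1]; ring
        have hctinv : χ ((x 0 * (x 1)⁻¹)⁻¹) = χ (x 1) - χ (x 0) := by
          rw [char_inv hχ, hct]; ring
        have mid : x (n + 2) = ((x 0)⁻¹) ^ (n + 1) * x 1 * (x 0) ^ (n + 1) := by
          have e : n + 2 = (n + 1) + 1 := by omega
          rw [e]; exact tower0 (n + 1)
        have hcomm : Commute ((x 0 * (x 1)⁻¹) ^ k) (x (n + 2)) :=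
          (t_comm (by omega)).pow_left k
        have idD : x (n + 2) =
            (x 0 * (x 1)⁻¹) ^ k * ((x 0)⁻¹) ^ (n + 1) * x 1 * (x 0) ^ (n + 1)
              * ((x 0 * (x 1)⁻¹)⁻¹) ^ k := by
          calc x (n + 2)
              = (x 0 * (x 1)⁻¹) ^ k * x (n + 2) * ((x 0 * (x 1)⁻¹) ^ k)⁻¹ := by
                rw [hcomm.eq]; group
            _ = (x 0 * (x 1)⁻¹) ^ k * (((x 0)⁻¹) ^ (n + 1) * x 1 * (x 0) ^ (n + 1))
                  * ((x 0 * (x 1)⁻¹)⁻¹) ^ k := by rw [← mid, inv_pow]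
            _ = _ := by group
        have Et : EW χ S (x 0 * (x 1)⁻¹) (d₀ + d₁) := by
          refine (EW.mul hχ e0 (EW.inv hχ e1)).mono ?_
          refine max_le (by linarith) (by linarith)
        have p1 : EW χ S ((x 0 * (x 1)⁻¹) ^ k)
            ((d₀ + d₁) + (k : ℝ) * max 0 (-χ (x 0 * (x 1)⁻¹))) :=
          EW.pow hχ (by linarith) Et k
        have hm1 : max 0 (-χ (x 0 * (x 1)⁻¹)) = 0 :=
          max_eq_left (by rw [hct]; linarith)
        rw [hm1] at p1
        have p2 : EW χ S (((x 0)⁻¹) ^ (n + 1))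
            ((d₀ + χ (x 0)) + ((n + 1 : ℕ) : ℝ) * max 0 (-χ ((x 0)⁻¹))) :=
          EW.pow hχ (by linarith) (EW.inv hχ e0) (n + 1)
        have hm2 : max 0 (-χ ((x 0)⁻¹)) = χ (x 0) := by
          rw [cInv0, neg_neg]; exact max_eq_right (by linarith)
        rw [hm2] at p2
        have p4 : EW χ S ((x 0) ^ (n + 1)) (d₀ + ((n + 1 : ℕ) : ℝ) * max 0 (-χ (x 0))) :=
          EW.pow hχ h0 e0 (n + 1)
        have hm4 : max 0 (-χ (x 0)) = 0 := max_eq_left (by linarith)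
        rw [hm4] at p4
        have p5 : EW χ S (((x 0 * (x 1)⁻¹)⁻¹) ^ k)
            ((d₀ + d₁ + χ (x 0 * (x 1)⁻¹)) + (k : ℝ) * max 0 (-χ ((x 0 * (x 1)⁻¹)⁻¹))) :=
          EW.pow hχ (by rw [hct]; linarith) (EW.inv hχ Et) k
        have hm5 : max 0 (-χ ((x 0 * (x 1)⁻¹)⁻¹)) = χ (x 0) - χ (x 1) := by
          rw [hctinv]; rw [neg_sub]; exact max_eq_right (by linarith)
        rw [hm5, hct] at p5
        rw [idD]
        refine EW.mono ?_ (EW.mul5 hχ p1 p2 e1 p4 p5)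
        simp only [cP, cInv0, cInv1, hct, hctinv, Nat.cast_add, Nat.cast_one,
          mul_zero, add_zero]
        have hn0 : (0:ℝ) ≤ (n:ℝ) := Nat.cast_nonneg n
        have hk0 : (0:ℝ) ≤ (k:ℝ) := Nat.cast_nonneg k
        refine max_le (max_le (max_le (max_le ?_ ?_) ?_) ?_) ?_ <;> nlinarith

end Club


section Upgrade

variable {χ : Fbr → ℝ} {S : Finset Fbr}

/-- Every element `v` with `χ v ≥ 0` admits an `S`-spelling with uniformly bounded dip. -/
lemma upgrade (hχ : IsChar χ) (hb : χ (x 1) ≠ 0) (hab : χ (x 0) ≠ χ (x 1))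
    (hS : Subgroup.closure (S : Set Fbr) = ⊤) :
    ∃ C : ℝ, 0 ≤ C ∧ ∀ v : Fbr, 0 ≤ χ v → EW χ S v C := by
  obtain ⟨d₀, hd₀, e0⟩ := EW.exists_of_mem_closure hχ hS (x 0)
  obtain ⟨d₁, hd₁, e1⟩ := EW.exists_of_mem_closure hχ hS (x 1)
  have habs := abs_nonneg (χ (x 0))
  have habs' := abs_nonneg (χ (x 1))
  have hlb := le_abs_self (χ (x 1))
  have hlb' := neg_abs_le (χ (x 1))
  set dstar := d₀ + d₁ + 2 * |χ (x 0)| + 2 * |χ (x 1)| with hds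
  have hdstar : 0 ≤ dstar := by rw [hds]; linarith
  have hclub := club hχ hb hab hd₀ hd₁ e0 e1
  refine ⟨dstar + |χ (x 1)|, by linarith, ?_⟩
  intro v hv
  obtain ⟨p, q, hp, hq, hsh⟩ := shifts_all v
  obtain ⟨D, hD0, hDE⟩ := EW.exists_of_mem_closure hχ hS v
  have hxq : χ (x q) = χ (x 1) := char_x hχ q hq
  have hxp : χ (x p) = χ (x 1) := char_x hχ p hp
  have cQ : ∀ (w : Fbr) (n : ℕ), χ (w ^ n) = n * χ w := char_pow hχ
  rcases lt_or_gt_of_ne hb with hbneg | hbpos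
  · -- χ (x 1) < 0 : use inverse elevators
    obtain ⟨R, hR⟩ := exists_nat_mul_ge (-χ (x 1)) (by linarith) D
    have id2 : v = ((x q)⁻¹) ^ R * v * (x p) ^ R := by
      have h := hsh.pow_left_inv R
      rw [h]; group
    have base1 : EW χ S ((x q)⁻¹) dstar := by
      refine (EW.inv hχ (hclub q hq)).mono ?_
      rw [hxq]; linarith
    have p1 : EW χ S (((x q)⁻¹) ^ R) (dstar + (R : ℝ) * max 0 (-χ ((x q)⁻¹))) :=
      EW.pow hχ hdstar base1 R
    have hm1 : max 0 (-χ ((x q)⁻¹)) = 0 := by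
      rw [char_inv hχ, neg_neg, hxq]
      exact max_eq_left (by linarith)
    rw [hm1, mul_zero, add_zero] at p1
    have p3 : EW χ S ((x p) ^ R) (dstar + (R : ℝ) * max 0 (-χ (x p))) :=
      EW.pow hχ hdstar (hclub p hp) R
    have hm3 : max 0 (-χ (x p)) = -χ (x 1) := by
      rw [hxp]; exact max_eq_right (by linarith)
    rw [hm3] at p3
    have h := EW.mul3 hχ p1 hDE p3
    rw [← id2] at h
    refine h.mono ?_
    have c1 : χ (((x q)⁻¹) ^ R) = (R : ℝ) * (-χ (x 1)) := by
      rw [cQ, char_inv hχ, hxq]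
    rw [c1]
    refine max_le (max_le (by linarith) (by linarith)) (by linarith)
  · -- 0 < χ (x 1) : use positive elevators
    obtain ⟨R, hR⟩ := exists_nat_mul_ge (χ (x 1)) hbpos D
    have id1 : v = (x q) ^ R * v * ((x p)⁻¹) ^ R := by
      have h := hsh.pow_left R
      rw [inv_pow, h]; group
    have p1 : EW χ S ((x q) ^ R) (dstar + (R : ℝ) * max 0 (-χ (x q))) :=
      EW.pow hχ hdstar (hclub q hq) R
    have hm1 : max 0 (-χ (x q)) = 0 := by
      rw [hxq]; exact max_eq_left (by linarith)
    rw [hm1, mul_zero, add_zero] at p1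
    have p3 : EW χ S (((x p)⁻¹) ^ R)
        ((dstar + χ (x p)) + (R : ℝ) * max 0 (-χ ((x p)⁻¹))) :=
      EW.pow hχ (by rw [hxp]; linarith) (EW.inv hχ (hclub p hp)) R
    have hm3 : max 0 (-χ ((x p)⁻¹)) = χ (x 1) := by
      rw [char_inv hχ, neg_neg, hxp]
      exact max_eq_right (by linarith)
    rw [hm3, hxp] at p3
    have h := EW.mul3 hχ p1 hDE p3
    rw [← id1] at h
    refine h.mono ?_
    have c1 : χ ((x q) ^ R) = (R : ℝ) * χ (x 1) := by rw [cQ, hxq]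
    rw [c1]
    refine max_le (max_le (by linarith) (by linarith)) (by linarith)

/-- A `Chain` at level `0` gives a path in the spanned subgraph. -/
lemma chain_reach {g k : Fbr} (h : Chain χ S 0 g k) :
    ∀ (pg : 0 ≤ χ g) (pk : 0 ≤ χ k),
      (cayleySubgraph S (fun g => 0 ≤ χ g)).Reachable ⟨g, pg⟩ ⟨k, pk⟩ := by
  induction h with
  | refl hg => intro pg pk; exact SimpleGraph.Reachable.refl _
  | @step h' s hs hc hh ih =>
    intro pg pk
    refine (ih pg hc.right).trans ?_
    by_cases he : h' * s = h'
    · have heq : (⟨h', hc.right⟩ : {g : Fbr // 0 ≤ χ g}) = ⟨h' * s, pk⟩ :=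
        Subtype.ext he.symm
      rw [← heq]
    · refine SimpleGraph.Adj.reachable ?_
      refine ⟨?_, ?_⟩
      · intro hcontra
        exact he (congrArg Subtype.val hcontra).symm
      · rcases hs with hsl | hsr
        · exact ⟨s, hsl, Or.inl rfl⟩
        · exact ⟨s⁻¹, hsr, Or.inr (by group)⟩

end Upgrade

/-- Any character of `Fbr` killing `Pbr` whose `φ0`- and `φ1`-components are both nonzero
(equivalently, `χ(x 1) ≠ 0` and `χ(x 0) ≠ χ(x 1)`) lies in the BNS invariant `Σ¹(Fbr)`. -/
theorem kills_pbr_in_bns (π : Fbr →* ThF) (hπ : PiSpec π)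
    (χ : Fbr → ℝ) (hχ : IsChar χ) (hker : ∀ g ∈ π.ker, χ g = 0)
    (hx1 : χ (x 1) ≠ 0) (hx01 : χ (x 0) ≠ χ (x 1))
    (S : Finset Fbr) (hS : Subgroup.closure (S : Set Fbr) = ⊤) :
    (cayleySubgraph S (fun g => 0 ≤ χ g)).Connected := by
  classical
  -- a generator with nonzero character value
  have hex : ∃ s₀, s₀ ∈ S ∧ χ s₀ ≠ 0 := by
    by_contra h
    push_neg at h
    have hall : ∀ g : Fbr, g ∈ Subgroup.closure (S : Set Fbr) → χ g = 0 := by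
      intro g hg
      refine Subgroup.closure_induction ?_ ?_ ?_ ?_ hg
      · intro s hs; exact h s hs
      · exact char_one hχ
      · intro u w _ _ hu hw; rw [hχ]; linarith
      · intro u _ hu; rw [char_inv hχ]; linarith
    exact hx1 (hall (x 1) (by rw [hS]; trivial))
  obtain ⟨s₀, hs₀S, hs₀⟩ := hex
  have hσ : ∃ σ : Fbr, (σ ∈ S ∨ σ⁻¹ ∈ S) ∧ 0 < χ σ := by
    rcases lt_or_gt_of_ne hs₀ with hneg | hpos
    · exact ⟨s₀⁻¹, Or.inr (by simpa using hs₀S), by rw [char_inv hχ]; linarith⟩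
    · exact ⟨s₀, Or.inl hs₀S, hpos⟩
  obtain ⟨σ, hσmem, hσpos⟩ := hσ
  obtain ⟨C, hC0, hU⟩ := upgrade hχ hx1 hx01 hS
  have hσ0 : EW χ S σ 0 := by
    have h := EW.mem hχ hσmem
    have hm : max 0 (-χ σ) = 0 := max_eq_left (by linarith)
    rwa [hm] at h
  -- every nonnegative element is connected to 1 at level 0
  have key : ∀ g : Fbr, 0 ≤ χ g → Chain χ S 0 1 g := by
    intro g hg
    obtain ⟨K, hK⟩ := exists_nat_mul_ge (χ σ) hσpos C
    have hσK : EW χ S (σ ^ K) 0 := by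
      have h := EW.pow hχ le_rfl hσ0 K
      have hm : max 0 (-χ σ) = 0 := max_eq_left (by linarith)
      rwa [hm, mul_zero, add_zero] at h
    have hχσK : χ (σ ^ K) = K * χ σ := char_pow hχ σ K
    set v := (σ ^ K)⁻¹ * (g * σ ^ K) with hv
    have hχv : χ v = χ g := by
      rw [hv, hχ, hχ, char_inv hχ]; ring
    have c1 : Chain χ S 0 1 (σ ^ K) := by
      have h := hσK 1
      rw [one_mul] at h
      have e : χ (1 : Fbr) - 0 = 0 := by rw [char_one hχ]; ring
      rwa [e] at h
    have c2 : Chain χ S 0 (σ ^ K) (g * σ ^ K) := by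
      have h := hU v (by rw [hχv]; exact hg) (σ ^ K)
      have e : σ ^ K * v = g * σ ^ K := by rw [hv]; group
      rw [e] at h
      refine h.mono ?_
      rw [hχσK]
      linarith
    have c3 : Chain χ S 0 (g * σ ^ K) g := by
      have h := hσK g
      have h2 := h.mono (show (0:ℝ) ≤ χ g - 0 by linarith)
      exact h2.symm
    exact (c1.trans c2).trans c3
  rw [SimpleGraph.connected_iff]
  constructor
  · intro u v
    have h1 : 0 ≤ χ (1 : Fbr) := le_of_eq (char_one hχ).symm
    have r1 := chain_reach (key u.1 u.2) h1 u.2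
    have r2 := chain_reach (key v.1 v.2) h1 v.2
    have hu : (⟨u.1, u.2⟩ : {g : Fbr // 0 ≤ χ g}) = u := rfl
    have hv' : (⟨v.1, v.2⟩ : {g : Fbr // 0 ≤ χ g}) = v := rfl
    rw [hu] at r1
    rw [hv'] at r2
    exact r1.symm.trans r2
  · exact ⟨⟨1, le_of_eq (char_one hχ).symm⟩⟩

end BrThompson
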